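/- Let p be a prime, k a field of characteristic p, and M a k-module. Suppose ∂_t, ∂_q, σ are k-linear endomorphisms of M such that ∂_q∘σ = σ∘∂_q and ∂_t∘σ − σ∘∂_t = id_M. Then (∂_t+∂_q)∘σ − σ∘(∂_t+∂_q) = id_M, and consequently ∑_{i=0}^{p−1} (∂_t+∂_q)^{i} ∘ (−σ^{p−1}) ∘ (∂_t+∂_q)^{p−1−i} = id_M. (If a p-complex of H_q-modules is contractible via an H_q-linear homotopy, then its totalization with total differential ∂_T = ∂_t + ∂_q is acyclic.) -/

import Mathlib

/-- Casts of integers congruent mod `p` agree in a ring where `(p : R) = 0`. -/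
lemma stmt14_cast_eq {A : Type*} [Ring A] {p : ℕ} (hA : ((p : ℕ) : A) = 0)
    {a b : ℤ} (h : (a : ZMod p) = (b : ZMod p)) : (a : A) = (b : A) := by
  obtain ⟨t, ht⟩ : (p : ℤ) ∣ a - b := by
    rw [← ZMod.intCast_zmod_eq_zero_iff_dvd]
    push_cast
    rw [h]; ring
  have hab : a = b + p * t := by linarith
  rw [hab]
  push_cast
  rw [hA]
  simp

/-- `C(p-1, i) ≡ (-1)^i mod p`. -/
lemma stmt14_choose (p : ℕ) (hp : p.Prime) :
    ∀ i, i ≤ p - 1 → (((p - 1).choose i : ℕ) : ZMod p) = (-1) ^ i := by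
  intro i
  induction i with
  | zero => intro _; simp
  | succ i ih =>
    intro hi
    have hp1 : p - 1 + 1 = p := Nat.succ_pred_eq_of_pos hp.pos
    have hpascal : p.choose (i + 1) = (p - 1).choose i + (p - 1).choose (i + 1) := by
      conv_lhs => rw [← hp1]
      exact Nat.choose_succ_succ' (p - 1) i
    have hdvd : p ∣ p.choose (i + 1) :=
      hp.dvd_choose_self (Nat.succ_ne_zero i) (by omega)
    have h0 : ((p.choose (i + 1) : ℕ) : ZMod p) = 0 := by
      rw [ZMod.natCast_eq_zero_iff]; exact hdvd
    have ihi := ih (by omega)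
    rw [hpascal] at h0
    push_cast at h0
    rw [ihi] at h0
    have : (((p - 1).choose (i + 1) : ℕ) : ZMod p) = -(-1) ^ i := by linear_combination h0
    rw [this, pow_succ]
    ring

lemma stmt14_neg_one_pow (p : ℕ) (hp : p.Prime) : ((-1 : ZMod p)) ^ (p - 1) = 1 := by
  rcases hp.eq_two_or_odd' with h | h
  · subst h; decide
  · exact (Nat.Odd.sub_odd h odd_one).neg_one_pow

/-- Key algebraic lemma: in a `k`-algebra `R` with `char k = p`, if `[D, s] = 1` then the
null-homotopy identity holds. -/
lemma stmt14_key (p : ℕ) (hp : p.Prime) (k : Type*) [Field k] [CharP k p]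
    (R : Type*) [Ring R] [Algebra k R] (D s : R) (hD : D * s - s * D = 1) :
    (Finset.range p).sum (fun i => D ^ i * (-(s ^ (p - 1))) * D ^ (p - 1 - i)) = 1 := by
  haveI : Fact p.Prime := ⟨hp⟩
  set n := p - 1 with hn
  have hp1 : n + 1 = p := Nat.succ_pred_eq_of_pos hp.pos
  have hpR : ((p : ℕ) : R) = 0 := by
    rw [← map_natCast (algebraMap k R) p, CharP.cast_eq_zero, map_zero]
  set A := Module.End k R with hA
  have hpA : ((p : ℕ) : A) = 0 := by
    rw [← map_natCast (algebraMap k A) p, CharP.cast_eq_zero, map_zero]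
  -- the commutation relation for powers
  have comm : ∀ m : ℕ, D * s ^ (m + 1) - s ^ (m + 1) * D = (m + 1) • s ^ m := by
    intro m
    induction m with
    | zero => simpa using hD
    | succ m ih =>
      have key : D * s ^ (m + 2) - s ^ (m + 2) * D
          = (D * s ^ (m + 1) - s ^ (m + 1) * D) * s + s ^ (m + 1) * (D * s - s * D) := by
        rw [pow_succ (s) (m + 1)]
        noncomm_ring
      rw [key, ih, hD, mul_one, smul_mul_assoc, ← pow_succ]
      exact (succ_nsmul _ (m + 1)).symm
  -- the commutator operator
  set f : A := LinearMap.mulLeft k D with hf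
  set g : A := LinearMap.mulRight k D with hg
  set L : A := f - g with hL
  have claimL : ∀ m : ℕ, (L ^ m) (s ^ m) = Nat.factorial m • (1 : R) := by
    intro m
    induction m with
    | zero =>
      simp only [pow_zero, Nat.factorial_zero, one_smul]
      rfl
    | succ m ih =>
      rw [pow_succ]
      have hLs : L (s ^ (m + 1)) = (m + 1) • s ^ m := by
        rw [hL]
        simp only [LinearMap.sub_apply, hf, hg, LinearMap.mulLeft_apply,
          LinearMap.mulRight_apply]
        exact comm m
      rw [Module.End.mul_apply, hLs, map_nsmul, ih, smul_smul]
      rw [Nat.factorial_succ]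
  -- expansion of L ^ n
  have hC : Commute f (-g) := (LinearMap.commute_mulLeft_right (R := k) D D).neg_right
  have hexp : L ^ n = ∑ m ∈ Finset.range (n + 1), f ^ m * g ^ (n - m) := by
    rw [hL, sub_eq_add_neg, hC.add_pow]
    refine Finset.sum_congr rfl ?_
    intro m hm
    have hm' : m ≤ n := by
      simp only [Finset.mem_range] at hm; omega
    set c : ℤ := (-1) ^ (n - m) * ((n.choose m : ℕ) : ℤ) with hcdef
    have hcz : ((c : ℤ) : ZMod p) = ((1 : ℤ) : ZMod p) := by
      rw [hcdef]
      push_cast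
      rw [stmt14_choose p hp m hm', ← pow_add, Nat.sub_add_cancel hm']
      rw [hn, stmt14_neg_one_pow p hp]
    have hc : ((-1 : A)) ^ (n - m) * ((n.choose m : ℕ) : A) = 1 := by
      have h2 := stmt14_cast_eq (A := Module.End k R) hpA hcz
      rw [hcdef] at h2
      push_cast at h2
      exact h2
    calc f ^ m * (-g) ^ (n - m) * ((n.choose m : ℕ) : A)
        = f ^ m * ((-1 : A) ^ (n - m) * g ^ (n - m)) * ((n.choose m : ℕ) : A) := by
          rw [neg_pow g]
      _ = f ^ m * ((-1 : A) ^ (n - m) * (g ^ (n - m) * ((n.choose m : ℕ) : A))) := by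
          rw [mul_assoc, mul_assoc]
      _ = f ^ m * ((-1 : A) ^ (n - m) * (((n.choose m : ℕ) : A) * g ^ (n - m))) := by
          rw [(Nat.cast_commute (n.choose m) (g ^ (n - m))).eq]
      _ = f ^ m * (((-1 : A) ^ (n - m) * ((n.choose m : ℕ) : A)) * g ^ (n - m)) := by
          rw [mul_assoc]
      _ = f ^ m * g ^ (n - m) := by rw [hc, one_mul]
  -- evaluate at s ^ n
  have heval : ∑ m ∈ Finset.range (n + 1), D ^ m * s ^ n * D ^ (n - m) = Nat.factorial n • (1 : R) := by
    rw [← claimL n, hexp, LinearMap.sum_apply]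
    refine Finset.sum_congr rfl ?_
    intro m _
    rw [Module.End.mul_apply, hf, hg, LinearMap.pow_mulLeft, LinearMap.pow_mulRight,
      LinearMap.mulRight_apply, LinearMap.mulLeft_apply, mul_assoc]
  -- Wilson
  have hwilson : ((Nat.factorial n : ℕ) : R) = -1 := by
    have hz : ((Nat.factorial n : ℤ) : ZMod p) = ((-1 : ℤ) : ZMod p) := by
      push_cast
      exact ZMod.wilsons_lemma p
    have := stmt14_cast_eq hpR hz
    push_cast at this
    exact this
  have hsum : ∑ m ∈ Finset.range (n + 1), D ^ m * s ^ n * D ^ (n - m) = -1 := by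
    rw [heval, nsmul_eq_mul, mul_one, hwilson]
  rw [← hp1]
  calc ∑ i ∈ Finset.range (n + 1), D ^ i * (-(s ^ n)) * D ^ (n - i)
      = -∑ i ∈ Finset.range (n + 1), D ^ i * s ^ n * D ^ (n - i) := by
        rw [← Finset.sum_neg_distrib]
        refine Finset.sum_congr rfl ?_
        intro i _
        simp [neg_mul, mul_neg]
    _ = 1 := by rw [hsum, neg_neg]

/-- if `∂_q` commutes with `σ` and `[∂_t, σ] = id`, then
`[(∂_t + ∂_q), σ] = id`, and consequently the null-homotopy identity
`∑_{i=0}^{p-1} (∂_t+∂_q)^i ∘ (-σ^(p-1)) ∘ (∂_t+∂_q)^(p-1-i) = id` holds. -/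
theorem stmt_14 (p : ℕ) (hp : p.Prime) (k : Type*) [Field k] [CharP k p]
    (M : Type*) [AddCommGroup M] [Module k M]
    (dt dq σ : Module.End k M)
    (h1 : dq * σ = σ * dq) (h2 : dt * σ - σ * dt = 1) :
    (dt + dq) * σ - σ * (dt + dq) = 1 ∧
      (Finset.range p).sum
        (fun i => (dt + dq) ^ i * (-(σ ^ (p - 1))) * (dt + dq) ^ (p - 1 - i)) = 1 := by
  have hcomm : (dt + dq) * σ - σ * (dt + dq) = 1 := by
    have : (dt + dq) * σ - σ * (dt + dq) = (dt * σ - σ * dt) + (dq * σ - σ * dq) := by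
      noncomm_ring
    rw [this, h2, h1]
    simp
  exact ⟨hcomm, stmt14_key p hp k (Module.End k M) (dt + dq) σ hcomm⟩
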